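/- Suppose the group G = ⟨⟨a₁,…,a_r⟩⟩ contains no odometer. Then the normalizer N_Ω(G) of G in Ω also contains no odometer. -/

import Mathlib

namespace BinTree

/-- Vertices of the infinite rooted binary tree: finite words over `{0,1}`. -/
abbrev Vertex : Type := List Bool

/-- A function on vertices is a tree automorphism function if it preserves lengths
(levels) and prefixes. -/
def IsTreeAutFun (f : Vertex → Vertex) : Prop :=
  (∀ v, (f v).length = v.length) ∧ ∀ v w : Vertex, (f (v ++ w)).take v.length = f v

/-- `Ω`: the automorphism group of the infinite rooted binary tree, realized as the
subgroup of permutations of the set of vertices preserving the tree structure. -/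
def TreeAut : Subgroup (Equiv.Perm Vertex) where
  carrier := {e | IsTreeAutFun ⇑e}
  one_mem' := ⟨fun _ => rfl, fun v w => by
    simpa using List.take_left (l₁ := v) (l₂ := w)⟩
  mul_mem' := by
    rintro a b ha hb
    obtain ⟨ha1, ha2⟩ := ha
    obtain ⟨hb1, hb2⟩ := hb
    refine ⟨fun v => ?_, fun v w => ?_⟩
    · simp [Equiv.Perm.mul_apply, ha1, hb1]
    · have hb' : b (v ++ w) = b v ++ (b (v ++ w)).drop v.length := by
        conv_lhs => rw [← List.take_append_drop v.length (b (v ++ w)), hb2]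
      have hlen : (b v).length = v.length := hb1 v
      calc ((a * b) (v ++ w)).take v.length
          = (a (b v ++ (b (v ++ w)).drop v.length)).take v.length := by
            rw [Equiv.Perm.mul_apply, ← hb']
        _ = a (b v) := by rw [← hlen]; exact ha2 _ _
        _ = (a * b) v := rfl
  inv_mem' := by
    intro a ha
    obtain ⟨ha1, ha2⟩ := ha
    show IsTreeAutFun ⇑a⁻¹
    have hlen : ∀ v : Vertex, (a⁻¹ v).length = v.length := by
      intro v
      have h := ha1 (a⁻¹ v)
      rw [(show ∀ x, a (a⁻¹ x) = x from fun x => Equiv.apply_symm_apply a x)] at h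
      exact h.symm ▸ rfl
    refine ⟨hlen, fun v w => ?_⟩
    have htl : ((a⁻¹ (v ++ w)).take v.length).length = v.length := by
      rw [List.length_take, hlen, List.length_append]
      omega
    have key : a ((a⁻¹ (v ++ w)).take v.length) = v := by
      have h2 := ha2 ((a⁻¹ (v ++ w)).take v.length) ((a⁻¹ (v ++ w)).drop v.length)
      rw [List.take_append_drop, htl, (show ∀ x, a (a⁻¹ x) = x from fun x => Equiv.apply_symm_apply a x)] at h2
      rw [← h2]
      simpa using List.take_left (l₁ := v) (l₂ := w)
    have h3 := congrArg (⇑a⁻¹) key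
    rwa [(show ∀ x, a⁻¹ (a x) = x from fun x => Equiv.symm_apply_apply a x)] at h3

/-- wreath recursion, forward map: `(g,h)σᵗ` -/
def wrFun (g h : Vertex → Vertex) (t : Bool) : Vertex → Vertex
  | [] => []
  | x :: v => (xor x t) :: (cond x (h v) (g v))

/-- wreath recursion, inverse map -/
def wrFunInv (g h : Vertex → Vertex) (t : Bool) : Vertex → Vertex
  | [] => []
  | y :: w => (xor y t) :: (cond (xor y t) (h w) (g w))

/-- `(g,h)σᵗ` as a permutation of the vertices. -/
def wrPerm (g h : Equiv.Perm Vertex) (t : Bool) : Equiv.Perm Vertex where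
  toFun := wrFun ⇑g ⇑h t
  invFun := wrFunInv ⇑g.symm ⇑h.symm t
  left_inv := by
    intro v
    cases v with
    | nil => rfl
    | cons x v => cases x <;> cases t <;> simp [wrFun, wrFunInv]
  right_inv := by
    intro v
    cases v with
    | nil => rfl
    | cons x v => cases x <;> cases t <;> simp [wrFun, wrFunInv]

/-- The element `(g,h)σᵗ` of `Ω`: acts on the first level by `σᵗ` (where `σ` is the
swap of the two level-one subtrees), with section `g` at the vertex `0` and section
`h` at the vertex `1`.  Thus `(γ₀,γ₁)τ` of the wreath recursion
`Ω ≃ (Ω × Ω) ⋊ S₂` is `wr γ₀ γ₁ t` (`t = true` iff `τ = σ`). -/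
def wr (g h : TreeAut) (t : Bool) : TreeAut :=
  ⟨wrPerm g.1 h.1 t, by
    have hg : IsTreeAutFun ⇑g.1 := g.2
    have hh : IsTreeAutFun ⇑h.1 := h.2
    constructor
    · intro v
      cases v with
      | nil => rfl
      | cons x v =>
        cases x <;> simp [wrPerm, wrFun, hg.1, hh.1]
    · intro v w
      cases v with
      | nil => simp [wrPerm, wrFun]
      | cons x v =>
        cases x <;> simp [wrPerm, wrFun, hg.2, hh.2]⟩

/-- Application of a tree automorphism to a vertex. -/
def ap (γ : TreeAut) (v : Vertex) : Vertex := γ.1 v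

/-- The permutation induced by `γ ∈ Ω` on level `n` of the tree. -/
def levelPerm (n : ℕ) (γ : TreeAut) : Equiv.Perm (List.Vector Bool n) where
  toFun v := ⟨γ.1 v.1, by
    have h : IsTreeAutFun ⇑γ.1 := γ.2
    rw [h.1 v.1]; exact v.2⟩
  invFun v := ⟨γ.1.symm v.1, by
    have h : IsTreeAutFun ⇑γ.1 := γ.2
    have h2 := h.1 (γ.1.symm v.1)
    rw [Equiv.apply_symm_apply] at h2
    exact h2.symm.trans v.2⟩
  left_inv v := Subtype.ext (Equiv.symm_apply_apply _ _)
  right_inv v := Subtype.ext (Equiv.apply_symm_apply _ _)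

/-- Restriction to level `n` as a group homomorphism. -/
def levelHom (n : ℕ) : TreeAut →* Equiv.Perm (List.Vector Bool n) where
  toFun := levelPerm n
  map_one' := Equiv.ext fun v => Subtype.ext rfl
  map_mul' := fun g h => Equiv.ext fun v => Subtype.ext rfl

/-- `sgn_n`: the sign of the permutation induced on level `n`. -/
def sgn (n : ℕ) (γ : TreeAut) : ℤˣ := Equiv.Perm.sign (levelPerm n γ)

/-- An odometer: acts as a single `2^n`-cycle on each level `n ≥ 1`. -/
def IsOdometer (γ : TreeAut) : Prop :=
  ∀ n : ℕ, 1 ≤ n → (levelPerm n γ).IsCycle ∧ (levelPerm n γ).support = Finset.univ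

/-- The profinite topology on `Ω`: the coarsest topology making all level
restrictions (to the discrete finite groups) continuous. -/
instance : TopologicalSpace TreeAut :=
  ⨅ n : ℕ, TopologicalSpace.induced (levelPerm n) ⊥

/-- A vertex `w` is in a stable cycle of `γ` of length `k`: its `γ`-orbit has exactly
`k` elements, and for every level `m` above the level of `w`, all level-`m` vertices
lying above this orbit are in one single `γ`-cycle (necessarily of length
`2^(m - n) * k`, which we record via the periodicity condition). -/
def InStableCycle (γ : TreeAut) (w : Vertex) (k : ℕ) : Prop :=
  0 < k ∧ ap (γ ^ k) w = w ∧ (∀ j : ℕ, 0 < j → j < k → ap (γ ^ j) w ≠ w) ∧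
  (∀ u : Vertex, w.length < u.length → (∃ i : ℕ, u.take w.length = ap (γ ^ i) w) →
    (ap (γ ^ (2 ^ (u.length - w.length) * k)) u = u ∧
      ∀ u' : Vertex, u'.length = u.length →
        (∃ i : ℕ, u'.take w.length = ap (γ ^ i) w) → ∃ j : ℕ, ap (γ ^ j) u = u'))

/-- Self-similar subgroup: closed under taking sections (here the section of `γ` at
the first-level vertex `x` is characterized by `(xv)γ = (x)γ ⬝ (v)γₓ`). -/
def SelfSimilar (H : Subgroup TreeAut) : Prop :=
  ∀ γ ∈ H, ∀ x : Bool, ∀ δ : TreeAut,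
    (∀ v : Vertex, ap γ (x :: v) = ap γ [x] ++ ap δ v) → δ ∈ H



/-! ### Auxiliary lemmas -/

section Aux

lemma ap_mul (γ δ : TreeAut) (v : Vertex) : ap (γ * δ) v = ap γ (ap δ v) := rfl

lemma ap_one (v : Vertex) : ap 1 v = v := rfl

lemma ap_len (γ : TreeAut) (v : Vertex) : (ap γ v).length = v.length := γ.2.1 v

lemma ap_take (γ : TreeAut) (v w : Vertex) : (ap γ (v ++ w)).take v.length = ap γ v := γ.2.2 v w

lemma ap_nil (γ : TreeAut) : ap γ [] = [] := List.length_eq_zero_iff.mp (ap_len γ [])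

lemma ap_inv_ap (γ : TreeAut) (v : Vertex) : ap γ⁻¹ (ap γ v) = v :=
  Equiv.symm_apply_apply γ.1 v

lemma ap_ap_inv (γ : TreeAut) (v : Vertex) : ap γ (ap γ⁻¹ v) = v :=
  Equiv.apply_symm_apply γ.1 v

lemma ap_injective (γ : TreeAut) : Function.Injective (ap γ) := γ.1.injective

lemma treeaut_ext {γ δ : TreeAut} (h : ∀ v, ap γ v = ap δ v) : γ = δ :=
  Subtype.ext (Equiv.ext h)

lemma wr_ap (g h : TreeAut) (t x : Bool) (v : Vertex) :
    ap (wr g h t) (x :: v) = (xor x t) :: cond x (ap h v) (ap g v) := rfl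

lemma wr_ap_nil (g h : TreeAut) (t : Bool) : ap (wr g h t) [] = [] := rfl

lemma wr_mul (g h g' h' : TreeAut) (t t' : Bool) :
    wr g h t * wr g' h' t' =
      wr (cond t' h g * g') (cond t' g h * h') (xor t t') := by
  apply treeaut_ext
  intro v
  cases v with
  | nil => simp [ap_mul, ap_nil]
  | cons x v =>
    rw [ap_mul, wr_ap, wr_ap, wr_ap]
    cases x <;> cases t' <;> simp [ap_mul]

lemma wr_one : wr 1 1 false = 1 := by
  apply treeaut_ext
  intro v
  cases v with
  | nil => simp [ap_nil]
  | cons x v => rw [wr_ap]; cases x <;> simp [ap_one]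

lemma wr_inv_true (g h : TreeAut) : (wr g h true)⁻¹ = wr h⁻¹ g⁻¹ true := by
  apply inv_eq_of_mul_eq_one_right
  rw [wr_mul]
  simp [wr_one]

lemma wr_inv_false (g h : TreeAut) : (wr g h false)⁻¹ = wr g⁻¹ h⁻¹ false := by
  apply inv_eq_of_mul_eq_one_right
  rw [wr_mul]
  simp [wr_one]

lemma tail_take {α : Type*} (l : List α) (n : ℕ) :
    (l.take (n + 1)).tail = l.tail.take n := by
  cases l <;> simp

lemma exists_head (γ : TreeAut) (x : Bool) : ∃ y : Bool, ap γ [x] = [y] :=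
  List.length_eq_one_iff.mp (ap_len γ [x])

lemma ap_cons (γ : TreeAut) (x : Bool) (v : Vertex) :
    ap γ (x :: v) = ap γ [x] ++ (ap γ (x :: v)).tail := by
  conv_lhs => rw [← List.take_append_drop 1 (ap γ (x :: v))]
  rw [List.drop_one]
  congr 1
  have := ap_take γ [x] v
  simpa using this

/-- The section of `γ` at the first-level vertex `x`, as a permutation. -/
def secPerm (γ : TreeAut) (x : Bool) : Equiv.Perm Vertex where
  toFun v := (ap γ (x :: v)).tail
  invFun v := (ap γ⁻¹ (ap γ [x] ++ v)).tail
  left_inv v := by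
    have h1 : ap γ [x] ++ (ap γ (x :: v)).tail = ap γ (x :: v) := (ap_cons γ x v).symm
    simp only [h1, ap_inv_ap]
    rfl
  right_inv v := by
    obtain ⟨y, hy⟩ := exists_head γ x
    have hinv : ap γ⁻¹ [y] = [x] := by rw [← hy, ap_inv_ap]
    have h1 : ap γ⁻¹ (y :: v) = x :: (ap γ⁻¹ (y :: v)).tail := by
      have := ap_cons γ⁻¹ y v
      rw [hinv] at this
      simpa using this
    rw [hy]
    show (ap γ (x :: (ap γ⁻¹ ([y] ++ v)).tail)).tail = v
    have h2 : ([y] ++ v : Vertex) = y :: v := rfl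
    rw [h2, ← h1, ap_ap_inv]
    rfl

lemma secPerm_mem (γ : TreeAut) (x : Bool) : secPerm γ x ∈ TreeAut.carrier := by
  constructor
  · intro v
    show ((ap γ (x :: v)).tail).length = v.length
    rw [List.length_tail, ap_len]
    rfl
  · intro v w
    show ((ap γ (x :: (v ++ w))).tail).take v.length = (ap γ (x :: v)).tail
    have h1 := congrArg List.tail (ap_take γ (x :: v) w)
    have h2 : (x :: (v ++ w) : Vertex) = (x :: v) ++ w := rfl
    rw [h2, ← h1]
    show _ = (List.take (v.length + 1) _).tail
    exact (tail_take _ _).symm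

/-- The section of `γ` at the first-level vertex `x`. -/
def sec (γ : TreeAut) (x : Bool) : TreeAut := ⟨secPerm γ x, secPerm_mem γ x⟩

lemma sec_ap (γ : TreeAut) (x : Bool) (v : Vertex) :
    ap γ (x :: v) = ap γ [x] ++ ap (sec γ x) v := ap_cons γ x v

lemma exists_wr (γ : TreeAut) : ∃ g h : TreeAut, ∃ t : Bool, γ = wr g h t := by
  obtain ⟨y, hy⟩ := exists_head γ false
  obtain ⟨z, hz⟩ := exists_head γ true
  have hzy : z = !y := by
    have hne : z ≠ y := by
      intro h
      have : ap γ [true] = ap γ [false] := by rw [hy, hz, h]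
      have := ap_injective γ this
      simp at this
    cases y <;> cases z <;> simp_all
  refine ⟨sec γ false, sec γ true, y, treeaut_ext fun v => ?_⟩
  cases v with
  | nil => rw [ap_nil, wr_ap_nil]
  | cons x v =>
    rw [wr_ap]
    cases x
    · rw [sec_ap γ false v, hy]
      simp
    · rw [sec_ap γ true v, hz, hzy]
      simp

/-! ### Level equality and the profinite topology -/

/-- Two automorphisms agree up to level `n`. -/
def levEq (n : ℕ) (γ δ : TreeAut) : Prop :=
  ∀ v : Vertex, v.length = n → ap γ v = ap δ v

lemma levelPerm_eq_of_levEq {n : ℕ} {γ δ : TreeAut} (h : levEq n γ δ) :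
    levelPerm n γ = levelPerm n δ := by
  apply Equiv.ext
  intro v
  exact Subtype.ext (h v.1 v.2)

lemma levEq_of_levelPerm_eq {n : ℕ} {γ δ : TreeAut} (h : levelPerm n γ = levelPerm n δ) :
    levEq n γ δ := by
  intro v hv
  have := Equiv.ext_iff.mp h ⟨v, hv⟩
  exact congrArg Subtype.val this

lemma levEq_mono {m n : ℕ} (hmn : m ≤ n) {γ δ : TreeAut} (h : levEq n γ δ) :
    levEq m γ δ := by
  intro v hv
  have hlen : (v ++ List.replicate (n - m) false).length = n := by
    simp [hv]; omega
  have heq := h _ hlen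
  have h1 := ap_take γ v (List.replicate (n - m) false)
  have h2 := ap_take δ v (List.replicate (n - m) false)
  rw [← h1, ← h2, heq]

lemma mem_closure_iff_lev (S : Set TreeAut) (x : TreeAut) :
    x ∈ closure S ↔ ∀ n : ℕ, ∃ g ∈ S, levEq n g x := by
  have hdisc : ∀ n : ℕ, @nhds (Equiv.Perm (List.Vector Bool n)) ⊥ = pure :=
    fun n => @nhds_discrete _ ⊥ (@DiscreteTopology.mk _ ⊥ rfl)
  have hn : (nhds x) = ⨅ n : ℕ, Filter.principal {y : TreeAut | levelPerm n y = levelPerm n x} := by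
    have hstep : @nhds TreeAut (⨅ n : ℕ, TopologicalSpace.induced (levelPerm n) ⊥) x
        = ⨅ n : ℕ, @nhds TreeAut (TopologicalSpace.induced (levelPerm n) ⊥) x := nhds_iInf
    refine Eq.trans hstep ?_
    congr 1
    funext n
    rw [@nhds_induced _ _ ⊥ (levelPerm n) x, hdisc n, Filter.comap_pure]
    rfl
  have hdir : Directed (· ≥ ·) fun n : ℕ =>
      Filter.principal {y : TreeAut | levelPerm n y = levelPerm n x} := by
    intro m n
    refine ⟨max m n, Filter.principal_mono.mpr ?_, Filter.principal_mono.mpr ?_⟩ <;>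
      · intro y hy
        exact levelPerm_eq_of_levEq (levEq_mono (by omega) (levEq_of_levelPerm_eq hy))
  constructor
  · intro hx n
    have hU : {y : TreeAut | levelPerm n y = levelPerm n x} ∈ nhds x := by
      rw [hn]
      exact Filter.mem_iInf_of_mem n (Filter.mem_principal_self _)
    obtain ⟨g, hg1, hg2⟩ := mem_closure_iff_nhds.mp hx _ hU
    exact ⟨g, hg2, levEq_of_levelPerm_eq hg1⟩
  · intro h
    rw [mem_closure_iff_nhds]
    intro t ht
    rw [hn, Filter.mem_iInf_of_directed hdir] at ht
    obtain ⟨n, hnt⟩ := ht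
    rw [Filter.mem_principal] at hnt
    obtain ⟨g, hgS, hlev⟩ := h n
    exact ⟨g, hnt (levelPerm_eq_of_levEq hlev), hgS⟩

lemma cl_mul {H : Subgroup TreeAut} {x y : TreeAut}
    (hx : x ∈ closure (H : Set TreeAut)) (hy : y ∈ closure (H : Set TreeAut)) :
    x * y ∈ closure (H : Set TreeAut) := by
  rw [mem_closure_iff_lev] at hx hy ⊢
  intro n
  obtain ⟨g, hgH, hgx⟩ := hx n
  obtain ⟨k, hkH, hky⟩ := hy n
  refine ⟨g * k, H.mul_mem hgH hkH, fun v hv => ?_⟩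
  rw [ap_mul, ap_mul, hky v hv, hgx _ (by rw [ap_len, hv])]

lemma cl_inv {H : Subgroup TreeAut} {x : TreeAut}
    (hx : x ∈ closure (H : Set TreeAut)) :
    x⁻¹ ∈ closure (H : Set TreeAut) := by
  rw [mem_closure_iff_lev] at hx ⊢
  intro n
  obtain ⟨g, hgH, hgx⟩ := hx n
  refine ⟨g⁻¹, H.inv_mem hgH, fun v hv => ?_⟩
  have h1 : ap g (ap x⁻¹ v) = v := by
    rw [hgx _ (by rw [ap_len, hv]), ap_ap_inv]
  calc ap g⁻¹ v = ap g⁻¹ (ap g (ap x⁻¹ v)) := by rw [h1]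
    _ = ap x⁻¹ v := ap_inv_ap g _

lemma cl_sec {H : Subgroup TreeAut}
    (hdec : ∀ u ∈ H, ∃ g h : TreeAut, ∃ t : Bool, u = wr g h t ∧ g ∈ H ∧ h ∈ H)
    {g h : TreeAut} {t : Bool} (hx : wr g h t ∈ closure (H : Set TreeAut)) :
    g ∈ closure (H : Set TreeAut) ∧ h ∈ closure (H : Set TreeAut) := by
  rw [mem_closure_iff_lev] at hx
  have key : ∀ n : ℕ, ∃ u0 u1 : TreeAut, u0 ∈ H ∧ u1 ∈ H ∧
      levEq n u0 g ∧ levEq n u1 h := by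
    intro n
    obtain ⟨u, huH, hlev⟩ := hx (n + 1)
    obtain ⟨u0, u1, t', hu, hu0, hu1⟩ := hdec u huH
    subst hu
    have hrep : (false :: List.replicate n false : Vertex).length = n + 1 := by simp
    have hte := hlev _ hrep
    rw [wr_ap, wr_ap] at hte
    have ht' : t' = t := by simpa using congrArg List.head? hte
    subst ht'
    refine ⟨u0, u1, hu0, hu1, fun v hv => ?_, fun v hv => ?_⟩
    · have := hlev (false :: v) (by simp [hv])
      rw [wr_ap, wr_ap] at this
      simpa using congrArg List.tail this
    · have := hlev (true :: v) (by simp [hv])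
      rw [wr_ap, wr_ap] at this
      simpa using congrArg List.tail this
  constructor <;> rw [mem_closure_iff_lev] <;> intro n <;>
    obtain ⟨u0, u1, hu0, hu1, hl0, hl1⟩ := key n
  · exact ⟨u0, hu0, hl0⟩
  · exact ⟨u1, hu1, hl1⟩

/-! ### Signs -/

lemma levelPerm_mul (n : ℕ) (x y : TreeAut) :
    levelPerm n (x * y) = levelPerm n x * levelPerm n y := map_mul (levelHom n) x y

lemma levelPerm_pow (n : ℕ) (x : TreeAut) (k : ℕ) :
    levelPerm n (x ^ k) = (levelPerm n x) ^ k := map_pow (levelHom n) x k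

lemma sgn_mul (n : ℕ) (x y : TreeAut) : sgn n (x * y) = sgn n x * sgn n y := by
  unfold sgn
  rw [levelPerm_mul, map_mul]

lemma sgn_one (n : ℕ) : sgn n (1 : TreeAut) = 1 := by
  unfold sgn
  rw [show levelPerm n (1 : TreeAut) = 1 from map_one (levelHom n), map_one]

lemma sgn_self_mul (n : ℕ) (x : TreeAut) : sgn n x * sgn n x = 1 :=
  Int.units_mul_self _

lemma sgn_inv (n : ℕ) (x : TreeAut) : sgn n x⁻¹ = sgn n x := by
  have h1 : sgn n x⁻¹ * sgn n x = 1 := by rw [← sgn_mul, inv_mul_cancel, sgn_one]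
  have h2 := sgn_self_mul n x
  calc sgn n x⁻¹ = sgn n x⁻¹ * (sgn n x * sgn n x) := by rw [h2, mul_one]
    _ = (sgn n x⁻¹ * sgn n x) * sgn n x := by rw [mul_assoc]
    _ = sgn n x := by rw [h1, one_mul]

/-- The cons equivalence on levels. -/
def consE (n : ℕ) : List.Vector Bool (n + 1) ≃ Bool × List.Vector Bool n where
  toFun v := (v.head, v.tail)
  invFun p := p.1 ::ᵥ p.2
  left_inv v := v.cons_head_tail
  right_inv p := by
    cases p
    simp [List.Vector.head_cons, List.Vector.tail_cons]

lemma levelPerm_cons {n : ℕ} (g h : TreeAut) (t x : Bool) (v : List.Vector Bool n) :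
    levelPerm (n + 1) (wr g h t) (x ::ᵥ v) = (xor x t) ::ᵥ (levelPerm n (cond x h g) v) := by
  apply Subtype.ext
  show ap (wr g h t) (x ::ᵥ v).1 = ((xor x t) ::ᵥ (levelPerm n (cond x h g) v)).1
  have h1 : (x ::ᵥ v).1 = x :: v.1 := rfl
  have h2 : ((xor x t) ::ᵥ (levelPerm n (cond x h g) v)).1
      = (xor x t) :: (ap (cond x h g) v.1) := rfl
  rw [h1, h2, wr_ap]
  cases x <;> rfl

lemma even_two_pow {n : ℕ} (hn : 1 ≤ n) : Even (2 ^ n) := by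
  obtain ⟨m, rfl⟩ := Nat.exists_eq_add_of_le hn
  exact ⟨2 ^ m, by rw [pow_add, pow_one]; ring⟩

lemma sgn_wr {n : ℕ} (hn : 1 ≤ n) (g h : TreeAut) (t : Bool) :
    sgn (n + 1) (wr g h t) = sgn n g * sgn n h := by
  classical
  set q : Equiv.Perm (Bool × List.Vector Bool n) :=
    (Equiv.prodCongrLeft fun _ : List.Vector Bool n =>
        if t then Equiv.swap false true else 1) *
      (Equiv.prodCongrRight fun x : Bool => cond x (levelPerm n h) (levelPerm n g))
    with hq
  have hcomm : ∀ v : List.Vector Bool (n + 1),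
      consE n (levelPerm (n + 1) (wr g h t) v) = q (consE n v) := by
    intro v
    rw [← v.cons_head_tail]
    set x := v.head
    set w := v.tail
    rw [levelPerm_cons]
    show (xor x t, levelPerm n (cond x h g) w) = q (x, w)
    rw [hq]
    show (xor x t, levelPerm n (cond x h g) w) =
      (Equiv.prodCongrLeft fun _ : List.Vector Bool n =>
        if t then Equiv.swap false true else 1)
        ((Equiv.prodCongrRight fun y : Bool => cond y (levelPerm n h) (levelPerm n g))
          (x, w))
    rw [Equiv.prodCongrRight_apply, Equiv.prodCongrLeft_apply]
    cases x <;> cases t <;> simp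
  have hsign := Equiv.Perm.sign_eq_sign_of_equiv (levelPerm (n + 1) (wr g h t)) q (consE n) hcomm
  unfold sgn
  rw [hsign, hq, map_mul, Equiv.Perm.sign_prodCongrLeft, Equiv.Perm.sign_prodCongrRight]
  have h1 : (∏ _k : List.Vector Bool n,
      Equiv.Perm.sign (if t then Equiv.swap false true else (1 : Equiv.Perm Bool))) = 1 := by
    cases t
    · simp
    · rw [if_pos rfl, Finset.prod_const, Equiv.Perm.sign_swap (by decide)]
      rw [Finset.card_univ, card_vector, Fintype.card_bool]
      exact Even.neg_one_pow (even_two_pow hn)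
  rw [h1, one_mul, Fintype.prod_bool]
  show Equiv.Perm.sign (levelPerm n h) * Equiv.Perm.sign (levelPerm n g) = _
  rw [mul_comm]

lemma levelPerm_one_wr_false (g h : TreeAut) : levelPerm 1 (wr g h false) = 1 := by
  apply Equiv.ext
  intro v
  apply Subtype.ext
  show ap (wr g h false) v.1 = v.1
  obtain ⟨l, hl⟩ := v
  match l, hl with
  | [x], _ =>
    rw [wr_ap]
    cases x <;> simp [ap_nil]

lemma sgn_odometer {γ : TreeAut} (hodo : IsOdometer γ) {n : ℕ} (hn : 1 ≤ n) :
    sgn n γ = -1 := by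
  obtain ⟨hc, hs⟩ := hodo n hn
  unfold sgn
  rw [hc.sign, hs, Finset.card_univ, card_vector, Fintype.card_bool,
    Even.neg_one_pow (even_two_pow hn)]

/-! ### Transitivity on levels -/

/-- `γ` acts transitively on level `n`. -/
def TransAt (n : ℕ) (γ : TreeAut) : Prop :=
  ∀ v w : List.Vector Bool n, ∃ k : ℕ, ((levelPerm n γ) ^ k) v = w

lemma vec1_cases (u v w : List.Vector Bool 1) (hvw : v ≠ w) : u = v ∨ u = w := by
  have key : ∀ z : List.Vector Bool 1,
      z = (⟨[false], rfl⟩ : List.Vector Bool 1) ∨ z = ⟨[true], rfl⟩ := by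
    rintro ⟨l, hl⟩
    match l, hl with
    | [x], _ => cases x
                · exact Or.inl rfl
                · exact Or.inr rfl
  rcases key u with hu | hu <;> rcases key v with hv | hv <;> rcases key w with hw | hw <;>
    subst hu <;> subst hv <;> subst hw <;>
    first | exact Or.inl rfl | exact Or.inr rfl | exact absurd rfl hvw

lemma sgn_neg_one_ne_one : (-1 : ℤˣ) ≠ 1 := by decide

lemma pow_apply_eq_of_fixed {α : Type*} {p : Equiv.Perm α} {v : α} (h : p v = v) (k : ℕ) :
    (p ^ k) v = v := by
  induction k with
  | zero => rfl
  | succ k ih => rw [pow_succ, Equiv.Perm.mul_apply, h, ih]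

lemma trans_of_sgn :
    ∀ n : ℕ, 1 ≤ n → ∀ γ : TreeAut, (∀ m : ℕ, 1 ≤ m → m ≤ n → sgn m γ = -1) → TransAt n γ := by
  intro n
  induction n with
  | zero => omega
  | succ n ih =>
    intro _ γ hsgn
    by_cases hn1 : n = 0
    · -- base case: level one
      subst hn1
      set p := levelPerm 1 γ with hp
      have hsign : Equiv.Perm.sign p = -1 := hsgn 1 le_rfl le_rfl
      have hpne : p ≠ 1 := by
        intro h
        rw [h, map_one] at hsign
        exact sgn_neg_one_ne_one hsign.symm
      intro v w
      by_cases hvw : v = w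
      · exact ⟨0, by rw [pow_zero]; exact hvw⟩
      refine ⟨1, ?_⟩
      rw [pow_one]
      rcases vec1_cases (p v) v w hvw with h | h
      · exfalso
        apply hpne
        apply Equiv.ext
        intro u
        have hw : p w = w := by
          rcases vec1_cases (p w) v w hvw with h' | h'
          · exact absurd (p.injective (h'.trans h.symm)).symm hvw
          · exact h'
        rcases vec1_cases u v w hvw with hu | hu <;> subst hu
        · exact h
        · exact hw
      · exact h
    · -- inductive step
      have hn : 1 ≤ n := by omega
      obtain ⟨γ₀, γ₁, t, hγ⟩ := exists_wr γ
      have ht : t = true := by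
        cases t
        · exfalso
          have h1 : sgn 1 γ = -1 := hsgn 1 le_rfl (by omega)
          rw [hγ] at h1
          unfold sgn at h1
          rw [levelPerm_one_wr_false, map_one] at h1
          exact sgn_neg_one_ne_one h1.symm
        · rfl
      subst ht
      set δ := γ₁ * γ₀ with hδ
      have hδsgn : ∀ m : ℕ, 1 ≤ m → m ≤ n → sgn m δ = -1 := by
        intro m h1 h2
        have hm := hsgn (m + 1) (by omega) (by omega)
        rw [hγ, sgn_wr h1] at hm
        rw [hδ, sgn_mul, mul_comm]
        exact hm
      have hT := ih hn δ hδsgn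
      have hsq : ∀ k : ℕ, γ ^ (2 * k) = wr (δ ^ k) ((γ₀ * γ₁) ^ k) false := by
        intro k
        induction k with
        | zero => rw [mul_zero, pow_zero, pow_zero, pow_zero, wr_one]
        | succ k ihk =>
          have h2 : 2 * (k + 1) = 2 * k + 1 + 1 := by ring
          rw [h2, pow_succ, pow_succ, ihk]
          have hg2 : wr (δ ^ k) ((γ₀ * γ₁) ^ k) false * γ * γ =
              wr (δ ^ k * δ) ((γ₀ * γ₁) ^ k * (γ₀ * γ₁)) false := by
            rw [hγ, wr_mul]
            rw [wr_mul]
            simp only [Bool.cond_true, Bool.cond_false]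
            rw [show xor (xor false true) true = false by decide]
            congr 1 <;> rw [mul_assoc]
          rw [hg2, ← pow_succ, ← pow_succ]
      have hfalse : ∀ (k : ℕ) (v : List.Vector Bool n),
          ((levelPerm (n + 1) γ) ^ (2 * k)) (false ::ᵥ v)
            = false ::ᵥ ((levelPerm n δ) ^ k) v := by
        intro k v
        rw [← levelPerm_pow, hsq k, levelPerm_cons, ← levelPerm_pow]
        rfl
      have hstep0 : ∀ v : List.Vector Bool n,
          (levelPerm (n + 1) γ) (false ::ᵥ v) = true ::ᵥ levelPerm n γ₀ v := by
        intro v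
        rw [hγ, levelPerm_cons]
        rfl
      have hstep1 : ∀ v : List.Vector Bool n,
          (levelPerm (n + 1) γ) (true ::ᵥ v) = false ::ᵥ levelPerm n γ₁ v := by
        intro v
        rw [hγ, levelPerm_cons]
        rfl
      have hreach : ∀ (v : List.Vector Bool n) (z : List.Vector Bool (n + 1)),
          ∃ k : ℕ, ((levelPerm (n + 1) γ) ^ k) (false ::ᵥ v) = z := by
        intro v z
        rw [← z.cons_head_tail]
        cases hz : z.head
        · obtain ⟨k, hk⟩ := hT v z.tail
          exact ⟨2 * k, by rw [hfalse, hk]⟩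
        · obtain ⟨k, hk⟩ := hT v ((levelPerm n γ₀)⁻¹ z.tail)
          refine ⟨2 * k + 1, ?_⟩
          rw [pow_succ', Equiv.Perm.mul_apply, hfalse, hk, hstep0,
            (show ∀ x, levelPerm n γ₀ ((levelPerm n γ₀)⁻¹ x) = x from fun x => Equiv.apply_symm_apply _ x)]
      intro u z
      rw [← u.cons_head_tail]
      cases hu : u.head
      · exact hreach u.tail z
      · obtain ⟨k, hk⟩ := hreach (levelPerm n γ₁ u.tail) z
        refine ⟨k + 1, ?_⟩
        rw [pow_succ, Equiv.Perm.mul_apply, hstep1]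
        exact hk

lemma odometer_of_sgn (γ : TreeAut) (h : ∀ n : ℕ, 1 ≤ n → sgn n γ = -1) :
    IsOdometer γ := by
  intro n hn
  have hT := trans_of_sgn n hn γ fun m h1 _ => h m h1
  have hcard : 1 < Fintype.card (List.Vector Bool n) := by
    rw [card_vector, Fintype.card_bool]
    exact Nat.one_lt_two_pow (by omega)
  have hfix : ∀ v, levelPerm n γ v ≠ v := by
    intro v hv
    obtain ⟨w, hw⟩ := Fintype.exists_ne_of_one_lt_card hcard v
    obtain ⟨k, hk⟩ := hT v w
    exact hw (hk.symm.trans (pow_apply_eq_of_fixed hv k))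
  have hnonempty : Nonempty (List.Vector Bool n) := Fintype.card_pos_iff.mp (by omega)
  obtain ⟨v⟩ := hnonempty
  constructor
  · refine ⟨v, hfix v, fun y _ => ?_⟩
    obtain ⟨k, hk⟩ := hT v y
    exact ⟨(k : ℤ), by rw [zpow_natCast]; exact hk⟩
  · ext w
    simp only [Equiv.Perm.mem_support, Finset.mem_univ, iff_true]
    exact hfix w

end Aux

/-- if G = ⟨⟨a₁,…,a_r⟩⟩ contains no odometer, then neither does
its normalizer in Ω. -/
theorem normalizer_no_odometer
    (r s : ℕ) (hr : 3 ≤ r) (hs1 : 1 < s) (hsr : s ≤ r)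
    (a : ZMod r → TreeAut)
    (ha1 : a 1 = wr (a (r : ZMod r)) 1 true)
    (hmid : ∀ i : ℕ, 2 ≤ i → i ≤ s - 1 → a (i : ZMod r) = wr 1 (a ((i - 1 : ℕ) : ZMod r)) false)
    (has : a (s : ZMod r) = wr 1 (a ((s - 1 : ℕ) : ZMod r)) true)
    (hhi : ∀ i : ℕ, s + 1 ≤ i → i ≤ r → a (i : ZMod r) = wr (a ((i - 1 : ℕ) : ZMod r)) 1 false)
    (hno : ∀ γ ∈ closure ((Subgroup.closure (Set.range a) : Subgroup TreeAut) : Set TreeAut),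
      ¬ IsOdometer γ) :
    ∀ γ : TreeAut,
      (∀ g : TreeAut,
        g ∈ closure ((Subgroup.closure (Set.range a) : Subgroup TreeAut) : Set TreeAut) ↔
        γ * g * γ⁻¹ ∈
          closure ((Subgroup.closure (Set.range a) : Subgroup TreeAut) : Set TreeAut)) →
      ¬ IsOdometer γ := by
  intro γ hnorm hodo
  haveI : NeZero r := ⟨by omega⟩
  set H : Subgroup TreeAut := Subgroup.closure (Set.range a) with hH
  have hone : (1 : TreeAut) ∈ H := H.one_mem
  have hmem : ∀ j : ZMod r, a j ∈ H := fun j => Subgroup.subset_closure ⟨j, rfl⟩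
  -- every generator decomposes with sections in H
  have hgen : ∀ j : ZMod r, ∃ g h : TreeAut, ∃ t : Bool,
      a j = wr g h t ∧ g ∈ H ∧ h ∈ H := by
    intro j
    have hval : ((j.val : ℕ) : ZMod r) = j := ZMod.natCast_rightInverse j
    have hvlt : j.val < r := ZMod.val_lt j
    rcases Nat.eq_zero_or_pos j.val with h0 | hpos
    · -- j = 0, i.e. j = r
      have hjr : j = ((r : ℕ) : ZMod r) := by
        rw [← hval, h0, Nat.cast_zero, ZMod.natCast_self]
      rcases eq_or_lt_of_le hsr with hseq | hslt
      · refine ⟨1, a ((s - 1 : ℕ) : ZMod r), true, ?_, hone, hmem _⟩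
        rw [hjr, show ((r : ℕ) : ZMod r) = ((s : ℕ) : ZMod r) by rw [hseq]]
        exact has
      · refine ⟨a ((r - 1 : ℕ) : ZMod r), 1, false, ?_, hmem _, hone⟩
        rw [hjr]
        exact hhi r (by omega) le_rfl
    · rcases Nat.lt_or_ge j.val 2 with h1 | h2
      · -- j = 1
        have hj1 : j = 1 := by
          rw [← hval, show j.val = 1 by omega, Nat.cast_one]
        refine ⟨a ((r : ℕ) : ZMod r), 1, true, ?_, hmem _, hone⟩
        rw [hj1]
        exact ha1
      · rcases Nat.lt_or_ge j.val s with hlt | hge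
        · rcases Nat.lt_or_ge j.val (s - 1) with hlt1 | hge1
          · refine ⟨1, a ((j.val - 1 : ℕ) : ZMod r), false, ?_, hone, hmem _⟩
            have := hmid j.val h2 (by omega)
            rwa [hval] at this
          · refine ⟨1, a ((j.val - 1 : ℕ) : ZMod r), false, ?_, hone, hmem _⟩
            have := hmid j.val h2 (by omega)
            rwa [hval] at this
        · rcases Nat.eq_or_lt_of_le hge with hjs | hgt
          · -- j.val = s
            refine ⟨1, a ((s - 1 : ℕ) : ZMod r), true, ?_, hone, hmem _⟩
            have := has
            rwa [show ((s : ℕ) : ZMod r) = j from by rw [hjs, hval]] at this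
          · refine ⟨a ((j.val - 1 : ℕ) : ZMod r), 1, false, ?_, hmem _, hone⟩
            have := hhi j.val (by omega) (by omega)
            rwa [hval] at this
  -- every element of H decomposes with sections in H
  have hdec : ∀ u ∈ H, ∃ g h : TreeAut, ∃ t : Bool,
      u = wr g h t ∧ g ∈ H ∧ h ∈ H := by
    intro u hu
    induction hu using Subgroup.closure_induction with
    | mem x hx =>
      obtain ⟨j, rfl⟩ := hx
      exact hgen j
    | one => exact ⟨1, 1, false, wr_one.symm, hone, hone⟩
    | mul x y hx hy ihx ihy =>
      obtain ⟨g, h, t, rfl, hg, hh⟩ := ihx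
      obtain ⟨g', h', t', rfl, hg', hh'⟩ := ihy
      refine ⟨cond t' h g * g', cond t' g h * h', xor t t', wr_mul g h g' h' t t', ?_, ?_⟩
      · cases t' <;> exact H.mul_mem (by assumption) hg'
      · cases t' <;> exact H.mul_mem (by assumption) hh'
    | inv x hx ihx =>
      obtain ⟨g, h, t, rfl, hg, hh⟩ := ihx
      cases t
      · exact ⟨g⁻¹, h⁻¹, false, wr_inv_false g h, H.inv_mem hg, H.inv_mem hh⟩
      · exact ⟨h⁻¹, g⁻¹, true, wr_inv_true g h, H.inv_mem hh, H.inv_mem hg⟩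
  -- decompose γ
  obtain ⟨γ₀, γ₁, t, hγw⟩ := exists_wr γ
  have ht : t = true := by
    cases t
    · exfalso
      have h1 : sgn 1 γ = -1 := sgn_odometer hodo le_rfl
      rw [hγw] at h1
      unfold sgn at h1
      rw [levelPerm_one_wr_false, map_one] at h1
      exact sgn_neg_one_ne_one h1.symm
    · rfl
  subst ht
  -- the key element γ₀ γ₁⁻¹ lies in the closure of H
  have ha1cl : a 1 ∈ closure (H : Set TreeAut) := subset_closure (hmem 1)
  have harcl : a ((r : ℕ) : ZMod r) ∈ closure (H : Set TreeAut) := subset_closure (hmem _)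
  have hc : γ * a 1 * γ⁻¹ ∈ closure (H : Set TreeAut) := (hnorm (a 1)).mp ha1cl
  have hcw : γ * a 1 * γ⁻¹ =
      wr (γ₀ * γ₁⁻¹) (γ₁ * a ((r : ℕ) : ZMod r) * γ₀⁻¹) true := by
    rw [hγw, ha1, wr_inv_true, wr_mul, wr_mul]
    simp only [Bool.cond_true, Bool.cond_false]
    norm_num
  have hd : (γ * a 1 * γ⁻¹) * (a 1)⁻¹ ∈ closure (H : Set TreeAut) :=
    cl_mul hc (cl_inv ha1cl)
  have hdw : (γ * a 1 * γ⁻¹) * (a 1)⁻¹ =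
      wr (γ₁ * a ((r : ℕ) : ZMod r) * γ₀⁻¹) (γ₀ * γ₁⁻¹ * (a ((r : ℕ) : ZMod r))⁻¹) false := by
    rw [hcw, ha1, wr_inv_true, wr_mul]
    simp only [Bool.cond_true, Bool.cond_false]
    norm_num
  rw [hdw] at hd
  have hsecs := cl_sec hdec hd
  have he : γ₀ * γ₁⁻¹ ∈ closure (H : Set TreeAut) := by
    have h1 := cl_mul hsecs.2 harcl
    rwa [mul_assoc, inv_mul_cancel, mul_one] at h1
  -- and it is an odometer: contradiction
  apply hno _ he
  apply odometer_of_sgn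
  intro n hn
  have hs1' : sgn (n + 1) γ = -1 := sgn_odometer hodo (by omega)
  rw [hγw, sgn_wr hn] at hs1'
  rw [sgn_mul, sgn_inv]
  exact hs1'

end BinTree
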